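/- arXiv:1907.10504 — 5 statements merged into one kernel-verified Lean document; each statement's English description precedes it below -/
import Mathlib

section
/- Let X and Y be orbit-finite sets with atoms and let F be an equivariant set of finitely supported functions from X to Y (with the conjugation action (π·f)(x) = π·f(π⁻¹·x)). Then F is orbit-finite if and only if there exists k ∈ ℕ such that every function in F is supported by a set of at most k atoms. -/
/-- Atoms: a fixed countably infinite set. -/
abbrev Atom : Type := ℕ

/-- Atom automorphisms: bijections of the atoms. -/
abbrev AtomPerm : Type := Equiv.Perm Atom

/-- `x` (in a set with atoms `X`) is supported by the finite set `A` of atoms. -/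
def SupportedBy {X : Type*} [MulAction AtomPerm X] (A : Finset Atom) (x : X) : Prop :=
  ∀ π : AtomPerm, (∀ a ∈ A, π a = a) → π • x = x

def FinitelySupported {X : Type*} [MulAction AtomPerm X] (x : X) : Prop :=
  ∃ A : Finset Atom, SupportedBy A x

def IsLeastSupport {X : Type*} [MulAction AtomPerm X] (A : Finset Atom) (x : X) : Prop :=
  SupportedBy A x ∧ ∀ B : Finset Atom, SupportedBy B x → A ⊆ B

/-- A function `f : X → Y` is supported by `A` if `f (π • x) = π • f x`
for every `A`-automorphism `π`. -/
def FunSupportedBy {X Y : Type*} [MulAction AtomPerm X] [MulAction AtomPerm Y]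
    (A : Finset Atom) (f : X → Y) : Prop :=
  ∀ π : AtomPerm, (∀ a ∈ A, π a = a) → ∀ x : X, f (π • x) = π • f x

/-- A function is equivariant if it commutes with all atom automorphisms. -/
def FunEquivariant {X Y : Type*} [MulAction AtomPerm X] [MulAction AtomPerm Y]
    (f : X → Y) : Prop :=
  ∀ (π : AtomPerm) (x : X), f (π • x) = π • f x

/-- A subset `S` of a set with atoms is supported by `A`
(as an element of the powerset with the induced action). -/
def SetSupportedBy {Z : Type*} [MulAction AtomPerm Z] (A : Finset Atom) (S : Set Z) : Prop :=
  ∀ π : AtomPerm, (∀ a ∈ A, π a = a) → ∀ z : Z, z ∈ S ↔ π • z ∈ S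

/-- A set with atoms is orbit-finite if every element is finitely supported and, for some
finite set `A` of atoms, it is a union of finitely many orbits of the group of
`A`-automorphisms. -/
def OrbitFinite (X : Type*) [MulAction AtomPerm X] : Prop :=
  (∀ x : X, FinitelySupported x) ∧
  ∃ (A : Finset Atom) (reps : Finset X),
    ∀ x : X, ∃ r ∈ reps, ∃ π : AtomPerm, (∀ a ∈ A, π a = a) ∧ π • r = x

/-- The multiplication of a monoid with atoms is finitely supported. -/
def MulFinitelySupported (M : Type*) [Monoid M] [MulAction AtomPerm M] : Prop :=
  ∃ A : Finset Atom, ∀ π : AtomPerm, (∀ a ∈ A, π a = a) →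
    ∀ x y : M, π • (x * y) = (π • x) * (π • y)

/-- An orbit-finite monoid: the underlying set is orbit-finite and
multiplication is finitely supported. -/
def OrbitFiniteMonoid (M : Type*) [Monoid M] [MulAction AtomPerm M] : Prop :=
  OrbitFinite M ∧ MulFinitelySupported M

/-- `x` is an infix of `y`. -/
def MInfix {M : Type*} [Monoid M] (x y : M) : Prop := ∃ a b : M, y = a * x * b

/-- `x` is a prefix of `y`. -/
def MPrefix {M : Type*} [Monoid M] (x y : M) : Prop := ∃ a : M, y = x * a

/-- `x` is a suffix of `y`. -/
def MSuffix {M : Type*} [Monoid M] (x y : M) : Prop := ∃ a : M, y = a * x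

def JEquiv {M : Type*} [Monoid M] (x y : M) : Prop := MInfix x y ∧ MInfix y x
def REquiv {M : Type*} [Monoid M] (x y : M) : Prop := MPrefix x y ∧ MPrefix y x
def LEquiv {M : Type*} [Monoid M] (x y : M) : Prop := MSuffix x y ∧ MSuffix y x

/-- A sequence of monoid elements is smooth if every element of the sequence can be
recovered from the product of the whole sequence by multiplying on both sides. -/
def SmoothSeq {M : Type*} [Monoid M] (l : List M) : Prop :=
  ∀ x ∈ l, ∃ y z : M, y * l.prod * z = x

/-- The conjugation action of atom automorphisms on functions between sets with atoms. -/
def conjAct {X Y : Type*} [MulAction AtomPerm X] [MulAction AtomPerm Y]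
    (π : AtomPerm) (f : X → Y) : X → Y :=
  fun x => π • f (π⁻¹ • x)

lemma exists_perm_extend (s : Finset ℕ) (j : ℕ → ℕ) (hj : Set.InjOn j ↑s) :
    ∃ π : Equiv.Perm ℕ, ∀ a ∈ s, π a = j a := by
  classical
  set t : Set ℕ := j '' ↑s with ht
  have hst : Set.BijOn j ↑s t := hj.bijOn_image
  let e : {x : ℕ // x ∈ (↑s : Set ℕ)} ≃ {x : ℕ // x ∈ t} := hst.equiv
  have hsc : (↑s : Set ℕ)ᶜ.Infinite := (s.finite_toSet).infinite_compl
  have htfin : t.Finite := (s.finite_toSet).image j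
  have htc : tᶜ.Infinite := htfin.infinite_compl
  have : Infinite {x : ℕ // ¬ x ∈ (↑s : Set ℕ)} := hsc.to_subtype
  have : Infinite {x : ℕ // ¬ x ∈ t} := htc.to_subtype
  obtain ⟨f⟩ : Nonempty ({x : ℕ // ¬ x ∈ (↑s : Set ℕ)} ≃ {x : ℕ // ¬ x ∈ t}) :=
    nonempty_equiv_of_countable
  refine ⟨Equiv.subtypeCongr e f, ?_⟩
  intro a ha
  have ha' : a ∈ (↑s : Set ℕ) := ha
  have h1 : Equiv.subtypeCongr e f a = ((e ⟨a, ha'⟩ : {x : ℕ // x ∈ t}) : ℕ) := by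
    simp only [Equiv.subtypeCongr, Equiv.trans_apply, Equiv.sumCompl_symm_apply_of_pos ha',
      Equiv.sumCongr_apply, Sum.map_inl, Equiv.sumCompl_apply_inl]
  rw [h1]; rfl

/-- if two perms agree on a support of `r`, they act the same way on `r`. -/
lemma smul_congr_support {X : Type*} [MulAction AtomPerm X] {B : Finset Atom} {r : X}
    (hB : SupportedBy B r) {π π' : AtomPerm} (h : ∀ a ∈ B, π a = π' a) : π • r = π' • r := by
  have hfix : (π'⁻¹ * π) • r = r := by
    apply hB
    intro a ha
    simp only [Equiv.Perm.mul_apply, h a ha]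
    exact Equiv.symm_apply_apply π' a
  calc π • r = π' • ((π'⁻¹ * π) • r) := by rw [smul_smul]; group
    _ = π' • r := by rw [hfix]

lemma supportedBy_smul {X : Type*} [MulAction AtomPerm X] {B : Finset Atom} {x : X}
    (hB : SupportedBy B x) (π : AtomPerm) : SupportedBy (B.image π) (π • x) := by
  intro σ hσ
  have h1 : (π⁻¹ * σ * π) • x = x := by
    apply hB
    intro a ha
    have : σ (π a) = π a := hσ _ (Finset.mem_image_of_mem π ha)
    simp only [Equiv.Perm.mul_apply, this, Equiv.Perm.inv_def, Equiv.symm_apply_apply]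
  calc σ • π • x = π • ((π⁻¹ * σ * π) • x) := by rw [smul_smul, smul_smul]; group
    _ = π • x := by rw [h1]

lemma funSupportedBy_conj {X Y : Type*} [MulAction AtomPerm X] [MulAction AtomPerm Y]
    {B : Finset Atom} {f : X → Y} (hB : FunSupportedBy B f) (π : AtomPerm) :
    FunSupportedBy (B.image π) (conjAct π f) := by
  intro σ hσ x
  have hfix : ∀ a ∈ B, (π⁻¹ * σ * π) a = a := by
    intro a ha
    have : σ (π a) = π a := hσ _ (Finset.mem_image_of_mem π ha)
    simp only [Equiv.Perm.mul_apply, this, Equiv.Perm.inv_def, Equiv.symm_apply_apply]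
  have key := hB (π⁻¹ * σ * π) hfix (π⁻¹ • x)
  unfold conjAct
  have h2 : π⁻¹ • σ • x = (π⁻¹ * σ * π) • (π⁻¹ • x) := by
    rw [smul_smul, smul_smul]; group
  rw [h2, key, smul_smul, smul_smul]
  have h3 : π * (π⁻¹ * σ * π) = σ * π := by group
  rw [h3]

lemma conjAct_mul {X Y : Type*} [MulAction AtomPerm X] [MulAction AtomPerm Y]
    (π σ : AtomPerm) (f : X → Y) : conjAct π (conjAct σ f) = conjAct (π * σ) f := by
  funext x
  unfold conjAct
  rw [smul_smul, mul_inv_rev, smul_smul]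

lemma conjAct_one {X Y : Type*} [MulAction AtomPerm X] [MulAction AtomPerm Y]
    (f : X → Y) : conjAct (1 : AtomPerm) f = f := by
  funext x; unfold conjAct; rw [inv_one, one_smul, one_smul]

lemma supportedBy_apply {X Y : Type*} [MulAction AtomPerm X] [MulAction AtomPerm Y]
    {S T : Finset Atom} {g : X → Y} {x : X} (hg : FunSupportedBy S g) (hx : SupportedBy T x) :
    SupportedBy (S ∪ T) (g x) := by
  intro π hπ
  have h1 : π • x = x := hx π (fun a ha => hπ a (Finset.mem_union_right _ ha))
  have := hg π (fun a ha => hπ a (Finset.mem_union_left _ ha)) x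
  rw [h1] at this
  exact this.symm

/-- the set of elements reachable from `r` by perms mapping the support `B` into `U`
is finite. -/
lemma finite_constrained_orbit {X : Type*} [MulAction AtomPerm X] (r : X)
    (B U : Finset Atom) (hB : SupportedBy B r) :
    {x : X | ∃ ρ : AtomPerm, (∀ a ∈ B, ρ a ∈ U) ∧ ρ • r = x}.Finite := by
  classical
  set Φ : ({a : ℕ // a ∈ B} → {a : ℕ // a ∈ U}) → X := fun j =>
    (if h : Set.InjOn (fun n => if hn : n ∈ B then (j ⟨n, hn⟩ : ℕ) else n) ↑B then
      (exists_perm_extend B _ h).choose else 1) • r with hΦ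
  apply (Set.finite_range Φ).subset
  rintro x ⟨ρ, hρU, rfl⟩
  refine ⟨fun b => ⟨ρ b, hρU b b.2⟩, ?_⟩
  have hagree : ∀ n ∈ B, (fun n => if hn : n ∈ B then
      ((fun b : {a : ℕ // a ∈ B} => (⟨ρ b, hρU b b.2⟩ : {a : ℕ // a ∈ U})) ⟨n, hn⟩ : ℕ)
      else n) n = ρ n := by
    intro n hn; simp [hn]
  have hinj : Set.InjOn (fun n => if hn : n ∈ B then
      ((fun b : {a : ℕ // a ∈ B} => (⟨ρ b, hρU b b.2⟩ : {a : ℕ // a ∈ U})) ⟨n, hn⟩ : ℕ)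
      else n) ↑B := by
    intro n hn m hm hnm
    rw [hagree n hn, hagree m hm] at hnm
    exact ρ.injective hnm
  rw [hΦ]
  simp only [dif_pos hinj]
  apply smul_congr_support hB
  intro a ha
  rw [(exists_perm_extend B _ hinj).choose_spec a ha]
  simp [ha]

lemma funSupportedBy_mono {X Y : Type*} [MulAction AtomPerm X] [MulAction AtomPerm Y]
    {B B' : Finset Atom} {f : X → Y} (hsub : B ⊆ B') (hB : FunSupportedBy B f) :
    FunSupportedBy B' f :=
  fun π hπ => hB π (fun a ha => hπ a (hsub ha))

/-- Every element of an orbit-finite set can be moved, by a permutation fixing `T`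
pointwise, into a fixed finite set `W`. -/
lemma exists_normal_form {X : Type*} [MulAction AtomPerm X] (hX : OrbitFinite X)
    (T : Finset Atom) :
    ∃ W : Finset X, ∀ x : X, ∃ w ∈ W, ∃ σ : AtomPerm, (∀ a ∈ T, σ a = a) ∧ σ • x = w := by
  classical
  obtain ⟨hfs, A, reps, hreps⟩ := hX
  choose Bf hBf using hfs
  set Fr : ℕ → Finset Atom := fun n => (Finset.range n).image (fun i => i + T.sup id + 1)
    with hFr
  have hFrT : ∀ n, ∀ m ∈ Fr n, m ∉ T := by
    intro n m hm hmT
    simp only [hFr, Finset.mem_image, Finset.mem_range] at hm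
    obtain ⟨i, _, rfl⟩ := hm
    have h5 : id (i + T.sup id + 1) ≤ T.sup id := Finset.le_sup (f := id) hmT
    simp only [id_eq] at h5
    exact absurd (lt_of_lt_of_le (Nat.lt_succ_of_le (Nat.le_add_left _ _)) h5) (lt_irrefl _)
  set Wset : Set X := ⋃ r ∈ (↑reps : Set X),
    {x : X | ∃ ρ : AtomPerm, (∀ a ∈ Bf r, ρ a ∈ T ∪ Fr (Bf r).card) ∧ ρ • r = x} with hWset
  have hWfin : Wset.Finite :=
    Set.Finite.biUnion reps.finite_toSet
      (fun r _ => finite_constrained_orbit r (Bf r) _ (hBf r))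
  refine ⟨hWfin.toFinset, ?_⟩
  intro x
  obtain ⟨r, hr, π, hπA, hπr⟩ := hreps x
  set B := Bf r with hB
  set n := B.card with hn
  set D := (B.image π) \ T with hD
  have hDcard : D.card ≤ n := by
    calc D.card ≤ (B.image π).card := Finset.card_le_card Finset.sdiff_subset
      _ ≤ B.card := Finset.card_image_le
  have hFrcard : (Fr n).card = n := by
    rw [hFr]
    rw [Finset.card_image_of_injective _ (fun a b hab => by simpa using hab), Finset.card_range]
  have hcard' : Fintype.card {a : ℕ // a ∈ D} ≤ Fintype.card {a : ℕ // a ∈ Fr n} := by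
    simpa [Fintype.card_coe, hFrcard] using hDcard
  obtain ⟨emb⟩ := Function.Embedding.nonempty_of_card_le hcard'
  set jfun : ℕ → ℕ := fun m => if h : m ∈ D then (emb ⟨m, h⟩ : ℕ) else m with hjfun
  have hjD : ∀ m (h : m ∈ D), jfun m = (emb ⟨m, h⟩ : ℕ) := fun m h => dif_pos h
  have hjnD : ∀ m, m ∉ D → jfun m = m := fun m h => dif_neg h
  have hinj : Set.InjOn jfun ↑(T ∪ D) := by
    intro m hm m' hm' hmm
    by_cases h1 : m ∈ D <;> by_cases h2 : m' ∈ D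
    · rw [hjD m h1, hjD m' h2] at hmm
      have := emb.injective (Subtype.ext hmm)
      exact congrArg Subtype.val this
    · exfalso
      rw [hjD m h1, hjnD m' h2] at hmm
      have hm'T : m' ∈ T := by
        have := Finset.mem_coe.mp hm'
        rcases Finset.mem_union.mp this with h | h
        · exact h
        · exact absurd h h2
      exact hFrT n _ (by rw [← hmm]; exact (emb ⟨m, h1⟩).2) hm'T
    · exfalso
      rw [hjnD m h1, hjD m' h2] at hmm
      have hmT : m ∈ T := by
        have := Finset.mem_coe.mp hm
        rcases Finset.mem_union.mp this with h | h
        · exact h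
        · exact absurd h h1
      exact hFrT n _ (by rw [hmm]; exact (emb ⟨m', h2⟩).2) hmT
    · rw [hjnD m h1, hjnD m' h2] at hmm; exact hmm
  obtain ⟨σ, hσ⟩ := exists_perm_extend (T ∪ D) jfun hinj
  have hσT : ∀ a ∈ T, σ a = a := by
    intro a ha
    rw [hσ a (Finset.mem_union_left _ ha)]
    exact hjnD a (fun h => (Finset.mem_sdiff.mp h).2 ha)
  refine ⟨σ • x, ?_, σ, hσT, rfl⟩
  rw [Set.Finite.mem_toFinset, hWset]
  apply Set.mem_biUnion (Finset.mem_coe.mpr hr)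
  refine ⟨σ * π, ?_, by rw [← hπr, smul_smul]⟩
  intro a ha
  have hπa : π a ∈ B.image π := Finset.mem_image_of_mem π ha
  by_cases hT : π a ∈ T
  · have hnD : π a ∉ D := fun h => (Finset.mem_sdiff.mp h).2 hT
    rw [Equiv.Perm.mul_apply, hσ _ (Finset.mem_union_left _ hT), hjnD _ hnD]
    exact Finset.mem_union_left _ hT
  · have hDm : π a ∈ D := Finset.mem_sdiff.mpr ⟨hπa, hT⟩
    rw [Equiv.Perm.mul_apply, hσ _ (Finset.mem_union_right _ hDm), hjD _ hDm]
    exact Finset.mem_union_right _ (emb ⟨π a, hDm⟩).2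

lemma finite_supported {X : Type*} [MulAction AtomPerm X] (hX : OrbitFinite X)
    (T : Finset Atom) : {x : X | SupportedBy T x}.Finite := by
  obtain ⟨W, hW⟩ := exists_normal_form hX T
  apply W.finite_toSet.subset
  intro x hx
  obtain ⟨w, hw, σ, hσ, hσx⟩ := hW x
  have hfix : σ • x = x := hx σ hσ
  rw [hfix] at hσx
  rw [hσx]
  exact hw

lemma finite_funSupported {X Y : Type*} [MulAction AtomPerm X] [MulAction AtomPerm Y]
    (hX : OrbitFinite X) (hY : OrbitFinite Y) (S : Finset Atom) :
    {g : X → Y | FunSupportedBy S g}.Finite := by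
  classical
  obtain ⟨W, hW⟩ := exists_normal_form hX S
  choose Bf hBf using hX.1
  set V : {w : X // w ∈ W} → Set Y := fun w => {y | SupportedBy (S ∪ Bf w.1) y} with hV
  have hVfin : ∀ w, (V w).Finite := fun w => finite_supported hY _
  have hpi : {h : {w : X // w ∈ W} → Y | ∀ w, h w ∈ V w}.Finite := Set.Finite.pi' hVfin
  apply Set.Finite.of_finite_image (f := fun (g : X → Y) (w : {w : X // w ∈ W}) => g w.1)
  · apply hpi.subset
    rintro h ⟨g, hg, rfl⟩ w
    exact supportedBy_apply hg (hBf w.1)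
  · intro g hg g' hg' hEq
    funext x
    obtain ⟨w, hw, σ, hσ, hσx⟩ := hW x
    have hx : x = σ⁻¹ • w := by rw [← hσx, inv_smul_smul]
    have hσ' : ∀ a ∈ S, σ⁻¹ a = a := by
      intro a ha
      conv_lhs => rw [← hσ a ha]
      exact Equiv.symm_apply_apply σ a
    have e1 : g x = σ⁻¹ • g w := by rw [hx]; exact hg σ⁻¹ hσ' w
    have e2 : g' x = σ⁻¹ • g' w := by rw [hx]; exact hg' σ⁻¹ hσ' w
    have e3 : g w = g' w := congrFun hEq ⟨w, hw⟩
    rw [e1, e2, e3]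

lemma exists_conj_supported {X Y : Type*} [MulAction AtomPerm X] [MulAction AtomPerm Y]
    {f : X → Y} {B : Finset Atom} (hB : FunSupportedBy B f)
    {k : ℕ} (hcard : B.card ≤ k) :
    ∃ π : AtomPerm, FunSupportedBy (Finset.range k) (conjAct π f) := by
  classical
  have hcard' : Fintype.card {a : ℕ // a ∈ B} ≤ Fintype.card {a : ℕ // a ∈ Finset.range k} := by
    simpa [Fintype.card_coe] using hcard
  obtain ⟨emb⟩ := Function.Embedding.nonempty_of_card_le hcard'
  set jfun : ℕ → ℕ := fun m => if h : m ∈ B then (emb ⟨m, h⟩ : ℕ) else m with hjfun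
  have hjB : ∀ m (h : m ∈ B), jfun m = (emb ⟨m, h⟩ : ℕ) := fun m h => dif_pos h
  have hinj : Set.InjOn jfun ↑B := by
    intro m hm m' hm' hmm
    have hm1 := Finset.mem_coe.mp hm
    have hm2 := Finset.mem_coe.mp hm'
    rw [hjB m hm1, hjB m' hm2] at hmm
    exact congrArg Subtype.val (emb.injective (Subtype.ext hmm))
  obtain ⟨π, hπ⟩ := exists_perm_extend B jfun hinj
  refine ⟨π, funSupportedBy_mono ?_ (funSupportedBy_conj hB π)⟩
  intro m hm
  obtain ⟨b, hb, rfl⟩ := Finset.mem_image.mp hm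
  rw [hπ b hb, hjB b hb]
  exact (emb ⟨b, hb⟩).2

/-- Let `X` and `Y` be orbit-finite sets with atoms and let `F` be an equivariant set of
finitely supported functions from `X` to `Y` (with the conjugation action). Then `F` is
orbit-finite if and only if there exists `k` such that every function in `F` is supported
by a set of at most `k` atoms. -/
theorem orbitFinite_function_set_iff_bounded_supports
    {X Y : Type*} [MulAction AtomPerm X] [MulAction AtomPerm Y]
    (hX : OrbitFinite X) (hY : OrbitFinite Y) (F : Set (X → Y))
    (hfs : ∀ f ∈ F, ∃ A : Finset Atom, FunSupportedBy A f)
    (heqv : ∀ (π : AtomPerm) (f : X → Y), f ∈ F → conjAct π f ∈ F) :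
    ((∀ f ∈ F, ∃ A : Finset Atom, FunSupportedBy A f) ∧
        ∃ (A : Finset Atom) (reps : Finset (X → Y)),
          F = ⋃ r ∈ (reps : Set (X → Y)),
            {f : X → Y | ∃ π : AtomPerm, (∀ a ∈ A, π a = a) ∧ conjAct π r = f})
      ↔ ∃ k : ℕ, ∀ f ∈ F, ∃ A : Finset Atom, A.card ≤ k ∧ FunSupportedBy A f := by
    classical
  constructor
  · rintro ⟨-, A, reps, hF⟩
    have hrepF : ∀ r ∈ reps, r ∈ F := by
      intro r hr
      rw [hF]
      exact Set.mem_biUnion (Finset.mem_coe.mpr hr) ⟨1, fun a _ => rfl, conjAct_one r⟩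
    have hbound : ∀ g : X → Y, ∃ n : ℕ, g ∈ F → ∃ B : Finset Atom,
        B.card ≤ n ∧ FunSupportedBy B g := by
      intro g
      by_cases hg : g ∈ F
      · obtain ⟨B, hB⟩ := hfs g hg
        exact ⟨B.card, fun _ => ⟨B, le_rfl, hB⟩⟩
      · exact ⟨0, fun h => absurd h hg⟩
    choose nf hnf using hbound
    refine ⟨reps.sup nf, ?_⟩
    intro f hf
    rw [hF] at hf
    simp only [Set.mem_iUnion, Set.mem_setOf_eq] at hf
    obtain ⟨r, hr, π, hπA, hπf⟩ := hf
    have hr' : r ∈ reps := hr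
    obtain ⟨B, hBcard, hB⟩ := hnf r (hrepF r hr')
    refine ⟨B.image π, ?_, ?_⟩
    · rw [Finset.card_image_of_injective _ π.injective]
      exact hBcard.trans (Finset.le_sup hr')
    · rw [← hπf]
      exact funSupportedBy_conj hB π
  · rintro ⟨k, hk⟩
    refine ⟨hfs, ∅, ?_⟩
    have hfin : (F ∩ {g : X → Y | FunSupportedBy (Finset.range k) g}).Finite :=
      (finite_funSupported hX hY (Finset.range k)).subset Set.inter_subset_right
    refine ⟨hfin.toFinset, ?_⟩
    ext f
    constructor
    · intro hf
      obtain ⟨B, hBc, hB⟩ := hk f hf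
      obtain ⟨π, hπ⟩ := exists_conj_supported hB hBc
      have hmem : conjAct π f ∈ F ∩ {g : X → Y | FunSupportedBy (Finset.range k) g} :=
        ⟨heqv π f hf, hπ⟩
      apply Set.mem_biUnion (Finset.mem_coe.mpr (hfin.mem_toFinset.mpr hmem))
      refine ⟨π⁻¹, fun a ha => absurd ha (Finset.notMem_empty a), ?_⟩
      rw [conjAct_mul, inv_mul_cancel, conjAct_one]
    · intro hf
      simp only [Set.mem_iUnion, Set.mem_setOf_eq] at hf
      obtain ⟨r, hr, π, -, rfl⟩ := hf
      have hrF : r ∈ F := (hfin.mem_toFinset.mp hr).1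
      exact heqv π r hrF
end

section
/- (Eggbox Lemma) Let M be an orbit-finite monoid and let x, y ∈ M. If x and x·y are J-equivalent, then x and x·y are R-equivalent. Similarly, if y and x·y are J-equivalent, then y and x·y are L-equivalent. -/
lemma exists_perm_swap (s t : Finset Atom) (hst : Disjoint s t) (hcard : s.card = t.card) :
    ∃ τ : AtomPerm, (∀ n, n ∉ s → n ∉ t → τ n = n) ∧ (∀ e ∈ s, τ e ∈ t) := by
  classical
  let e := Finset.equivOfCardEq hcard
  set g : ℕ → ℕ := fun n =>
      if h : n ∈ s then (e ⟨n, h⟩ : ℕ) else if h : n ∈ t then (e.symm ⟨n, h⟩ : ℕ) else n with hg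
  have hinv : Function.Involutive g := by
    intro n
    by_cases hs : n ∈ s
    · have ht : (e ⟨n, hs⟩ : ℕ) ∈ t := (e ⟨n, hs⟩).2
      have hns : (e ⟨n, hs⟩ : ℕ) ∉ s := fun h => (Finset.disjoint_left.1 hst h) ht
      simp [hg, hs, hns, ht]
    · by_cases ht : n ∈ t
      · have hs' : (e.symm ⟨n, ht⟩ : ℕ) ∈ s := (e.symm ⟨n, ht⟩).2
        simp [hg, hs, ht, hs']
      · simp [hg, hs, ht]
  refine ⟨hinv.toPerm g, fun n hns hnt => ?_, fun n hn => ?_⟩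
  · show g n = n
    simp [hg, hns, hnt]
  · show g n ∈ t
    simpa [hg, hn] using (e ⟨n, hn⟩).2


lemma orbit_supported_finite {M : Type*} [MulAction AtomPerm M]
    (r : M) (B : Finset Atom) (hB : SupportedBy B r) (A : Finset Atom) :
    {x : M | SupportedBy A x ∧ ∃ π : AtomPerm, π • r = x}.Finite := by
  classical
  obtain ⟨N, hNA⟩ : ∃ N : ℕ, ∀ a ∈ A, a < N := by
    refine ⟨A.sup id + 1, fun a ha => ?_⟩
    have := Finset.le_sup (f := id) ha
    simp only [id_eq] at this
    unfold Atom at *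
    omega
  set D : Finset Atom := (Finset.range B.card).image (fun i => i + N) with hD
  have hDA : Disjoint D A := by
    rw [Finset.disjoint_left]
    intro n hn hA
    obtain ⟨i, -, rfl⟩ := Finset.mem_image.1 hn
    have h2 := hNA _ hA
    unfold Atom at *
    omega
  have hDcard : D.card = B.card := by
    rw [hD, Finset.card_image_of_injective _ (fun a b h => by unfold Atom at *; omega)]
    exact Finset.card_range _
  set C : Finset Atom := A ∪ D with hC
  have key : ∀ x ∈ {x : M | SupportedBy A x ∧ ∃ π : AtomPerm, π • r = x},
      ∃ σ : AtomPerm, σ • r = x ∧ ∀ b ∈ B, σ b ∈ C := by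
    rintro x ⟨hxA, π, rfl⟩
    set E : Finset Atom := (B.image π) \ C with hE
    have hEcard : E.card ≤ (D \ B.image π).card := by
      have h1 := Finset.card_sdiff_add_card_inter (B.image π) D
      have h2 := Finset.card_sdiff_add_card_inter D (B.image π)
      have h3 : (B.image π).card ≤ B.card := Finset.card_image_le
      have h4 : E ⊆ (B.image π) \ D := by
        rw [hE, hC]
        exact Finset.sdiff_subset_sdiff le_rfl Finset.subset_union_right
      have h5 := Finset.card_le_card h4
      have h6 : (B.image π) ∩ D = D ∩ (B.image π) := Finset.inter_comm _ _
      rw [h6] at h1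
      omega
    obtain ⟨t, htsub, htcard⟩ := Finset.exists_subset_card_eq hEcard
    have hdisj : Disjoint E t := by
      rw [Finset.disjoint_left]
      intro n hnE hnt
      have hnC : n ∉ C := (Finset.mem_sdiff.1 hnE).2
      have : n ∈ D := (Finset.mem_sdiff.1 (htsub hnt)).1
      exact hnC (Finset.mem_union_right _ this)
    obtain ⟨τ, hτfix, hτmap⟩ := exists_perm_swap E t hdisj htcard.symm
    refine ⟨τ * π, ?_, ?_⟩
    · rw [mul_smul]
      refine hxA τ (fun a ha => hτfix a ?_ ?_)
      · intro haE
        exact (Finset.mem_sdiff.1 haE).2 (Finset.mem_union_left _ ha)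
      · intro hat
        exact Finset.disjoint_left.1 hDA (Finset.mem_sdiff.1 (htsub hat)).1 ha
    · intro b hb
      show τ (π b) ∈ C
      by_cases h : π b ∈ C
      · rw [hτfix (π b) (fun hmem => (Finset.mem_sdiff.1 hmem).2 h)
          (fun hmem => (Finset.mem_sdiff.1 (htsub hmem)).2
            (Finset.mem_image_of_mem π hb))]
        exact h
      · have hmem : π b ∈ E := Finset.mem_sdiff.2 ⟨Finset.mem_image_of_mem π hb, h⟩
        exact Finset.mem_union_right _ (Finset.mem_sdiff.1 (htsub (hτmap _ hmem))).1
  set f : M → (↥B → ℕ) := fun x =>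
    if h : ∃ σ : AtomPerm, σ • r = x ∧ ∀ b ∈ B, σ b ∈ C then (fun b => h.choose (b : ℕ))
    else fun _ => 0 with hf
  have himg : f '' {x : M | SupportedBy A x ∧ ∃ π : AtomPerm, π • r = x} ⊆
      Set.univ.pi (fun _ : ↥B => (↑C : Set ℕ)) := by
    rintro g ⟨x, hx, rfl⟩
    have h := key x hx
    intro b _
    simp only [hf, dif_pos h]
    exact h.choose_spec.2 (b : ℕ) b.2
  have hinj : Set.InjOn f {x : M | SupportedBy A x ∧ ∃ π : AtomPerm, π • r = x} := by
    intro x hx x' hx' hfe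
    have h := key x hx
    have h' := key x' hx'
    have hagree : ∀ a ∈ B, h.choose a = h'.choose a := by
      intro a ha
      have := congrFun hfe ⟨a, ha⟩
      simpa [hf, dif_pos h, dif_pos h'] using this
    have hfix : ∀ a ∈ B, ((h'.choose)⁻¹ * h.choose) a = a := by
      intro a ha
      rw [Equiv.Perm.mul_apply, hagree a ha]
      exact Equiv.symm_apply_apply _ _
    have hr := hB _ hfix
    calc x = h.choose • r := h.choose_spec.1.symm
    _ = (h'.choose * ((h'.choose)⁻¹ * h.choose)) • r := by rw [mul_inv_cancel_left]
    _ = h'.choose • (((h'.choose)⁻¹ * h.choose) • r) := by rw [mul_smul]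
    _ = h'.choose • r := by rw [hr]
    _ = x' := h'.choose_spec.1
  exact Set.Finite.of_finite_image
    ((Set.Finite.pi fun _ => C.finite_toSet).subset himg) hinj


lemma supported_finite {M : Type*} [MulAction AtomPerm M] (h : OrbitFinite M) (A : Finset Atom) :
    {x : M | SupportedBy A x}.Finite := by
  obtain ⟨h1, A₀, reps, hreps⟩ := h
  have hsub : {x : M | SupportedBy A x} ⊆
      ⋃ r ∈ reps, {x : M | SupportedBy A x ∧ ∃ π : AtomPerm, π • r = x} := by
    intro x hx
    obtain ⟨r, hr, π, -, hπ⟩ := hreps x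
    exact Set.mem_biUnion hr ⟨hx, π, hπ⟩
  refine Set.Finite.subset (Set.Finite.biUnion reps.finite_toSet fun r _ => ?_) hsub
  obtain ⟨B, hBr⟩ := h1 r
  exact orbit_supported_finite r B hBr A


lemma exists_idempotent_power {M : Type*} [Monoid M] [MulAction AtomPerm M]
    (hM : OrbitFiniteMonoid M) (v : M) : ∃ n : ℕ, 1 ≤ n ∧ v ^ n * v ^ n = v ^ n := by
  obtain ⟨hOF, Am, hAm⟩ := hM
  obtain ⟨Av, hAv⟩ := hOF.1 v
  have hsup : ∀ n : ℕ, SupportedBy (Am ∪ Av) (v ^ (n + 1)) := by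
    intro n
    induction n with
    | zero =>
      intro π hπ
      simpa using hAv π (fun a ha => hπ a (Finset.mem_union_right _ ha))
    | succ k ih =>
      intro π hπ
      rw [pow_succ, hAm π (fun a ha => hπ a (Finset.mem_union_left _ ha)), ih π hπ,
        hAv π (fun a ha => hπ a (Finset.mem_union_right _ ha))]
  have hfin := supported_finite hOF (Am ∪ Av)
  obtain ⟨i, -, j, -, hij, hvij⟩ := Set.infinite_univ.exists_ne_map_eq_of_mapsTo
      (f := fun n : ℕ => v ^ (n + 1)) (fun n _ => by exact hsup n) hfin
  -- wlog i < j
  obtain ⟨m, p, hp, hmp⟩ : ∃ m p : ℕ, 1 ≤ p ∧ v ^ (m + 1) = v ^ (m + 1 + p) := by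
    rcases hij.lt_or_gt with h | h
    · exact ⟨i, j - i, by omega, by rw [hvij]; congr 1; omega⟩
    · exact ⟨j, i - j, by omega, by rw [← hvij]; congr 1; omega⟩
  set m1 := m + 1 with hm1
  have hper : ∀ k t : ℕ, v ^ (m1 + t + k * p) = v ^ (m1 + t) := by
    intro k
    induction k with
    | zero => simp
    | succ k ih =>
      intro t
      have he : m1 + t + (k + 1) * p = (m1 + p) + (t + k * p) := by ring
      rw [he, pow_add, ← hmp, ← pow_add]
      have he2 : m1 + (t + k * p) = m1 + t + k * p := by ring
      rw [he2, ih t]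
  refine ⟨m1 * p, Nat.one_le_iff_ne_zero.2 (by positivity), ?_⟩
  have hmle : m1 ≤ m1 * p := Nat.le_mul_of_pos_right m1 hp
  obtain ⟨t, ht⟩ := Nat.exists_eq_add_of_le hmle
  rw [← pow_add]
  nth_rewrite 1 [ht]
  have he : m1 + t + m1 * p = m1 + t + m1 * p := rfl
  rw [hper m1 t, ← ht]


/-- (Eggbox Lemma) In an orbit-finite monoid, if `x` and `x*y` are J-equivalent then they
are R-equivalent, and if `y` and `x*y` are J-equivalent then they are L-equivalent. -/
theorem eggbox {M : Type*} [Monoid M] [MulAction AtomPerm M]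
    (hM : OrbitFiniteMonoid M) (x y : M) :
    (JEquiv x (x * y) → REquiv x (x * y)) ∧ (JEquiv y (x * y) → LEquiv y (x * y)) := by
  constructor
  · rintro ⟨-, a, b, hab⟩
    have h1 : x = a * x * (y * b) := by
      conv_lhs => rw [hab]
      simp [mul_assoc]
    have hstep : ∀ n : ℕ, x = a ^ n * x * (y * b) ^ n := by
      intro n
      induction n with
      | zero => simp
      | succ k ih =>
        calc x = a * x * (y * b) := h1
        _ = a * (a ^ k * x * (y * b) ^ k) * (y * b) := by rw [← ih]
        _ = (a * a ^ k) * x * ((y * b) ^ k * (y * b)) := by simp [mul_assoc]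
        _ = a ^ (k + 1) * x * (y * b) ^ (k + 1) := by rw [← pow_succ', ← pow_succ]
    obtain ⟨n, hn1, hn⟩ := exists_idempotent_power hM (y * b)
    have hx : x = x * (y * b) ^ n := by
      calc x = a ^ n * x * (y * b) ^ n := hstep n
      _ = a ^ n * x * ((y * b) ^ n * (y * b) ^ n) := by rw [hn]
      _ = (a ^ n * x * (y * b) ^ n) * (y * b) ^ n := by simp [mul_assoc]
      _ = x * (y * b) ^ n := by rw [← hstep n]
    obtain ⟨k, hk⟩ := Nat.exists_eq_add_of_le hn1
    refine ⟨⟨y, rfl⟩, ⟨b * (y * b) ^ k, ?_⟩⟩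
    calc x = x * (y * b) ^ n := hx
    _ = x * ((y * b) * (y * b) ^ k) := by rw [hk, pow_add, pow_one]
    _ = x * y * (b * (y * b) ^ k) := by simp [mul_assoc]
  · rintro ⟨-, a, b, hab⟩
    have h1 : y = (a * x) * y * b := by
      conv_lhs => rw [hab]
      simp [mul_assoc]
    have hstep : ∀ n : ℕ, y = (a * x) ^ n * y * b ^ n := by
      intro n
      induction n with
      | zero => simp
      | succ k ih =>
        calc y = (a * x) * y * b := h1
        _ = (a * x) * ((a * x) ^ k * y * b ^ k) * b := by rw [← ih]
        _ = ((a * x) * (a * x) ^ k) * y * (b ^ k * b) := by simp [mul_assoc]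
        _ = (a * x) ^ (k + 1) * y * b ^ (k + 1) := by rw [← pow_succ', ← pow_succ]
    obtain ⟨n, hn1, hn⟩ := exists_idempotent_power hM (a * x)
    have hy : y = (a * x) ^ n * y := by
      calc y = (a * x) ^ n * y * b ^ n := hstep n
      _ = ((a * x) ^ n * (a * x) ^ n) * y * b ^ n := by rw [hn]
      _ = (a * x) ^ n * ((a * x) ^ n * y * b ^ n) := by simp [mul_assoc]
      _ = (a * x) ^ n * y := by rw [← hstep n]
    obtain ⟨k, hk⟩ := Nat.exists_eq_add_of_le hn1
    refine ⟨⟨x, rfl⟩, ⟨(a * x) ^ k * a, ?_⟩⟩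
    calc y = (a * x) ^ n * y := hy
    _ = ((a * x) * (a * x) ^ k) * y := by rw [hk, pow_add, pow_one]
    _ = ((a * x) ^ k * (a * x)) * y := by rw [← pow_succ', ← pow_succ]
    _ = (a * x) ^ k * a * (x * y) := by simp [mul_assoc]
end

section
/- The J-height of every orbit-finite monoid is finite: for every orbit-finite monoid M there exists n ∈ ℕ such that every sequence x₁, …, x_m of elements of M in which each x_i is an infix of x_{i+1} but x_{i+1} is not an infix of x_i has length m ≤ n. -/
/-- Extend an injection on a finite set to a permutation with finite support. -/
lemma extend_injOn (T : Finset ℕ) :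
    ∀ g : ℕ → ℕ, Set.InjOn g ↑T →
    ∃ τ : Equiv.Perm ℕ, (∀ t ∈ T, τ t = g t) ∧ {n : ℕ | τ n ≠ n}.Finite := by
  classical
  induction T using Finset.induction_on with
  | empty => intro g _; exact ⟨1, by simp, by simp⟩
  | @insert a s ha ih =>
    intro g hg
    obtain ⟨τ', h1, h2⟩ := ih g (hg.mono (by simp [Set.subset_insert]))
    set c := τ'⁻¹ (g a) with hc
    refine ⟨τ' * Equiv.swap a c, ?_, ?_⟩
    · intro t ht
      rcases Finset.mem_insert.mp ht with rfl | hts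
      · simp [Equiv.Perm.mul_apply, Equiv.swap_apply_left, hc,
          Equiv.apply_symm_apply]
      · have hta : t ≠ a := by rintro rfl; exact ha hts
        have htc : t ≠ c := by
          rintro rfl
          have hgt : g c = g a := by
            rw [← h1 c hts]
            show τ' c = g a
            rw [hc]
            exact τ'.apply_symm_apply (g a)
          exact hta (hg (by simp [hts]) (by simp) hgt)
        simp [Equiv.Perm.mul_apply, Equiv.swap_apply_of_ne_of_ne hta htc, h1 t hts]
    · apply Set.Finite.subset (h2.union ((Set.finite_singleton c).insert a))
      intro n hn
      simp only [Set.mem_setOf_eq] at hn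
      by_cases hna : n = a
      · exact Set.mem_union_right _ (by simp [hna])
      by_cases hnc : n = c
      · exact Set.mem_union_right _ (by simp [hnc])
      refine Set.mem_union_left _ ?_
      intro he
      apply hn
      simp [Equiv.Perm.mul_apply, Equiv.swap_apply_of_ne_of_ne hna hnc, he]

/-- A permutation with finite support has finite order. -/
lemma perm_pow_eq_one (τ : Equiv.Perm ℕ) (h : {n : ℕ | τ n ≠ n}.Finite) :
    ∃ k : ℕ, 0 < k ∧ τ ^ k = 1 := by
  classical
  have hp : ∀ n, τ n ≠ n ↔ τ (τ n) ≠ τ n := by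
    intro n
    constructor
    · intro hn hc; exact hn (τ.injective hc)
    · intro hn hc
      apply hn
      rw [hc]
      exact hc
  have : Finite {n : ℕ // τ n ≠ n} := h.to_subtype
  let e : Equiv.Perm {n : ℕ // τ n ≠ n} := τ.subtypePerm (fun n => (hp n).symm)
  obtain ⟨k, hk, hek⟩ := (isOfFinOrder_of_finite e).exists_pow_eq_one
  have hfix : ∀ (j : ℕ) (n : ℕ), τ n = n → (τ ^ j) n = n := by
    intro j
    induction j with
    | zero => intro n _; rfl
    | succ j ihj =>
      intro n hn
      rw [pow_succ]
      simp only [Equiv.Perm.mul_apply, hn]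
      exact ihj n hn
  have hsub : ∀ (j : ℕ) (n : ℕ) (hn : τ n ≠ n), ((e ^ j) ⟨n, hn⟩ : ℕ) = (τ ^ j) n := by
    intro j
    induction j with
    | zero => intro n hn; rfl
    | succ j ihj =>
      intro n hn
      rw [pow_succ', pow_succ']
      simp only [Equiv.Perm.mul_apply]
      have hcoe : ∀ z : {n : ℕ // τ n ≠ n}, (e z : ℕ) = τ (z : ℕ) := fun z => rfl
      rw [hcoe]
      exact congrArg τ (ihj n hn)
  refine ⟨k, hk, ?_⟩
  ext n
  simp only [Equiv.Perm.one_apply]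
  by_cases hn : τ n = n
  · exact hfix k n hn
  · have := hsub k n hn
    rw [hek] at this
    simpa using this.symm

/-- If two permutations agree on a support of `z`, they act identically on `z`. -/
lemma smul_eq_of_agree {M : Type*} [MulAction AtomPerm M] (S : Finset Atom) (z : M)
    (hS : ∀ π : AtomPerm, (∀ a ∈ S, π a = a) → π • z = z)
    (π π' : AtomPerm) (h : ∀ s ∈ S, π s = π' s) :
    π • z = π' • z := by
  have h1 : (π'⁻¹ * π) • z = z := by
    apply hS
    intro s hs
    show π'⁻¹ (π s) = s
    rw [h s hs]
    exact π'.symm_apply_apply s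
  have h2 : π' • ((π'⁻¹ * π) • z) = π • z := by
    rw [← mul_smul]
    congr 1
    group
  rw [h1] at h2
  exact h2.symm

/-- Key periodicity lemma: if `τ` fixes the support of multiplication and has finite
order, and `x` is an infix of `τ • x`, then `τ • x` is an infix of `x`. -/
lemma infix_flip {M : Type*} [Monoid M] [MulAction AtomPerm M]
    (A : Finset Atom)
    (hmul : ∀ π : AtomPerm, (∀ a ∈ A, π a = a) → ∀ u v : M, π • (u * v) = (π • u) * (π • v))
    (τ : AtomPerm) (hτ : ∀ a ∈ A, τ a = a) (k : ℕ) (hk : 0 < k) (hτk : τ ^ k = 1)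
    (x : M) (h : ∃ a b : M, τ • x = a * x * b) : ∃ a b : M, x = a * (τ • x) * b := by
  obtain ⟨a, b, hab⟩ := h
  have hfixpow : ∀ (j : ℕ) (c : Atom), c ∈ A → (τ ^ j) c = c := by
    intro j
    induction j with
    | zero => intro c _; rfl
    | succ j ihj =>
      intro c hc
      rw [pow_succ]
      simp only [Equiv.Perm.mul_apply, hτ c hc]
      exact ihj c hc
  have key : ∀ j : ℕ, ∃ u v : M, (τ ^ j) • x = u * x * v := by
    intro j
    induction j with
    | zero => exact ⟨1, 1, by simp⟩
    | succ j ihj =>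
      obtain ⟨u, v, huv⟩ := ihj
      refine ⟨((τ ^ j) • a) * u, v * ((τ ^ j) • b), ?_⟩
      have h0 : (τ ^ (j + 1)) • x = (τ ^ j) • (τ • x) := by
        rw [pow_succ, mul_smul]
      rw [h0, hab, hmul _ (hfixpow j) (a * x) b, hmul _ (hfixpow j) a x, huv]
      simp [mul_assoc]
  obtain ⟨u, v, huv⟩ := key (k - 1)
  have h1 : τ • ((τ ^ (k - 1)) • x) = x := by
    rw [← mul_smul, ← pow_succ']
    have : k - 1 + 1 = k := by omega
    rw [this, hτk, one_smul]
  refine ⟨τ • u, τ • v, ?_⟩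
  have h2 : τ • ((τ ^ (k - 1)) • x) = (τ • u) * (τ • x) * (τ • v) := by
    rw [huv, hmul τ hτ (u * x) v, hmul τ hτ u x]
  rw [h1] at h2
  exact h2

/-- The J-height of every orbit-finite monoid is finite: there is a bound `n` on the length
of sequences that are strictly increasing in the infix preorder. -/
theorem jHeight_finite {M : Type*} [Monoid M] [MulAction AtomPerm M]
    (hM : OrbitFiniteMonoid M) :
    ∃ n : ℕ, ∀ (m : ℕ) (x : Fin m → M),
      (∀ (i : ℕ) (h : i + 1 < m),
        MInfix (x ⟨i, by omega⟩) (x ⟨i + 1, h⟩) ∧ ¬ MInfix (x ⟨i + 1, h⟩) (x ⟨i, by omega⟩)) →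
      m ≤ n := by
  classical
  obtain ⟨⟨hfs, B, R, hR⟩, A, hmul⟩ := hM
  choose supp hsupp using hfs
  choose rep hrep πx hπfix hπ using hR
  set S : Finset Atom := R.sup supp with hSdef
  refine ⟨(R ×ˢ (S ×ˢ A).powerset).card, ?_⟩
  intro m x hchain
  set key : M → M × Finset (ℕ × ℕ) :=
    fun z => (rep z, ((supp (rep z)) ×ˢ A).filter (fun q => πx z q.1 = q.2)) with hkeydef
  -- basic infix facts
  have hrefl : ∀ z : M, MInfix z z := fun z => ⟨1, 1, by simp⟩
  have htrans : ∀ {u v w : M}, MInfix u v → MInfix v w → MInfix u w := by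
    rintro u v w ⟨a, b, rfl⟩ ⟨c, d, rfl⟩
    exact ⟨c * a, b * d, by simp [mul_assoc]⟩
  -- chain is monotone
  have h1 : ∀ (j : ℕ) (hj : j < m) (i : ℕ) (hij : i ≤ j),
      MInfix (x ⟨i, lt_of_le_of_lt hij hj⟩) (x ⟨j, hj⟩) := by
    intro j
    induction j with
    | zero =>
      intro hj i hij
      have : i = 0 := Nat.le_zero.mp hij
      subst this
      exact hrefl _
    | succ j ihj =>
      intro hj i hij
      by_cases hcase : i = j + 1
      · subst hcase; exact hrefl _
      · have hij' : i ≤ j := by omega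
        have hjm : j < m := by omega
        exact htrans (ihj hjm i hij') (hchain j hj).1
  -- strictness propagates
  have h2 : ∀ (i j : ℕ) (hij : i < j) (hj : j < m),
      ¬ MInfix (x ⟨j, hj⟩) (x ⟨i, lt_trans hij hj⟩) := by
    intro i j hij hj hcontra
    have hi1 : i + 1 ≤ j := hij
    have : MInfix (x ⟨i + 1, lt_of_le_of_lt hi1 hj⟩) (x ⟨i, lt_trans hij hj⟩) :=
      htrans (h1 j hj (i + 1) hi1) hcontra
    exact (hchain i (lt_of_le_of_lt hi1 hj)).2 this
  -- equal keys lead to contradiction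
  have main : ∀ (i j : ℕ) (hi : i < m) (hj : j < m), i < j →
      key (x ⟨i, hi⟩) ≠ key (x ⟨j, hj⟩) := by
    intro i j hi hj hij hkeq
    set xi := x ⟨i, hi⟩ with hxi
    set xj := x ⟨j, hj⟩ with hxj
    have hr : rep xi = rep xj := congrArg Prod.fst hkeq
    set r := rep xi with hrdef
    set πi := πx xi with hπidef
    set πj := πx xj with hπjdef
    have hD : ((supp r) ×ˢ A).filter (fun q => πi q.1 = q.2) =
        ((supp r) ×ˢ A).filter (fun q => πj q.1 = q.2) := by
      have := congrArg Prod.snd hkeq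
      simpa [hkeydef, ← hr] using this
    have hagree : ∀ s ∈ supp r,
        (πi s ∈ A → πj s = πi s) ∧ (πj s ∈ A → πi s = πj s) := by
      intro s hs
      constructor
      · intro hin
        have hmem : (s, πi s) ∈ ((supp r) ×ˢ A).filter (fun q => πi q.1 = q.2) := by
          simp [Finset.mem_filter, Finset.mem_product, hs, hin]
        rw [hD] at hmem
        exact (Finset.mem_filter.mp hmem).2
      · intro hin
        have hmem : (s, πj s) ∈ ((supp r) ×ˢ A).filter (fun q => πj q.1 = q.2) := by
          simp [Finset.mem_filter, Finset.mem_product, hs, hin]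
        rw [← hD] at hmem
        exact (Finset.mem_filter.mp hmem).2
    set g : ℕ → ℕ :=
      fun t => if h : ∃ s, s ∈ supp r ∧ πi s = t then πj h.choose else t with hgdef
    set T : Finset ℕ := (supp r).image πi ∪ A with hTdef
    -- g is injective on T
    have haux : ∀ t t' : ℕ, t' ∈ T → (h : ∃ s, s ∈ supp r ∧ πi s = t) →
        ¬ (∃ s, s ∈ supp r ∧ πi s = t') → g t = g t' → False := by
      intro t t' ht' h h' hgt
      have hgt' : πj h.choose = t' := by
        rw [hgdef] at hgt
        simpa [dif_pos h, dif_neg h'] using hgt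
      have ht'A : t' ∈ A := by
        rcases Finset.mem_union.mp ht' with himg | hA
        · exfalso
          obtain ⟨s, hs, hst⟩ := Finset.mem_image.mp himg
          exact h' ⟨s, hs, hst⟩
        · exact hA
      have hmemA : πj h.choose ∈ A := by rw [hgt']; exact ht'A
      have := (hagree h.choose h.choose_spec.1).2 hmemA
      exact h' ⟨h.choose, h.choose_spec.1, this.trans hgt'⟩
    have hinj : Set.InjOn g ↑T := by
      intro t ht t' ht' hgt
      by_cases h : ∃ s, s ∈ supp r ∧ πi s = t <;>
        by_cases h' : ∃ s, s ∈ supp r ∧ πi s = t'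
      · have e1 : πj h.choose = πj h'.choose := by
          rw [hgdef] at hgt
          simpa [dif_pos h, dif_pos h'] using hgt
        have e2 : h.choose = h'.choose := πj.injective e1
        rw [← h.choose_spec.2, ← h'.choose_spec.2, e2]
      · exact absurd hgt (fun hgt => haux t t' ht' h h' hgt)
      · exact absurd hgt.symm (fun hgt => haux t' t ht h' h hgt)
      · rw [hgdef] at hgt
        simpa [dif_neg h, dif_neg h'] using hgt
    obtain ⟨τ, hτT, hτfin⟩ := extend_injOn T g hinj
    have hτA : ∀ a ∈ A, τ a = a := by
      intro a ha
      rw [hτT a (Finset.mem_union_right _ ha), hgdef]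
      by_cases h : ∃ s, s ∈ supp r ∧ πi s = a
      · have hmemA : πi h.choose ∈ A := by rw [h.choose_spec.2]; exact ha
        have h3 := (hagree h.choose h.choose_spec.1).1 hmemA
        simp only [dif_pos h]
        rw [h3, h.choose_spec.2]
      · simp [dif_neg h]
    have hτx : τ • xi = xj := by
      have hc : ∀ s ∈ supp r, (τ * πi) s = πj s := by
        intro s hs
        have hmem : πi s ∈ T :=
          Finset.mem_union_left _ (Finset.mem_image_of_mem _ hs)
        have hex : ∃ s', s' ∈ supp r ∧ πi s' = πi s := ⟨s, hs, rfl⟩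
        have hch : hex.choose = s := πi.injective hex.choose_spec.2
        calc (τ * πi) s = τ (πi s) := rfl
          _ = g (πi s) := hτT _ hmem
          _ = πj hex.choose := by rw [hgdef]; simp only [dif_pos hex]
          _ = πj s := by rw [hch]
      have heq : (τ * πi) • r = πj • r :=
        smul_eq_of_agree (supp r) r (hsupp r) _ _ hc
      calc τ • xi = τ • (πi • r) := by rw [hrdef, hπidef, hπ xi]
        _ = (τ * πi) • r := by rw [mul_smul]
        _ = πj • r := heq
        _ = πj • rep xj := by rw [hr]
        _ = xj := hπ xj
    obtain ⟨k, hk, hτk⟩ := perm_pow_eq_one τ hτfin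
    have hinfij : MInfix xi xj := h1 j hj i (le_of_lt hij)
    have hflip : MInfix xj xi := by
      rw [← hτx] at hinfij ⊢
      exact infix_flip A hmul τ hτA k hk hτk xi hinfij
    exact h2 i j hij hj hflip
  -- conclude by cardinality
  have hcard : (Finset.univ : Finset (Fin m)).card ≤ (R ×ˢ (S ×ˢ A).powerset).card := by
    apply Finset.card_le_card_of_injOn (fun i => key (x i))
    · intro i _
      rw [Finset.mem_coe, Finset.mem_product]
      constructor
      · exact hrep (x i)
      · rw [Finset.mem_powerset]
        intro q hq
        have hq1 := Finset.mem_filter.mp hq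
        have hq2 := Finset.mem_product.mp hq1.1
        rw [Finset.mem_product]
        refine ⟨?_, hq2.2⟩
        have hsub : supp (rep (x i)) ⊆ S := Finset.le_sup (hrep (x i))
        exact hsub hq2.1
    · intro i _ j _ hkeq
      by_contra hne
      have hne' : (i : Fin m) ≠ j := hne
      rcases lt_or_gt_of_ne (fun hv => hne' (Fin.ext hv) : (i : ℕ) ≠ (j : ℕ)) with hlt | hgt
      · exact main i.1 j.1 i.2 j.2 hlt hkeq
      · exact main j.1 i.1 j.2 i.2 hgt hkeq.symm
  simpa using hcard
end

section
/- (Uniformisation) Let X and Y be polynomial orbit-finite sets and let R ⊆ X × Y be a finitely supported binary relation such that for every x ∈ X the set xR = {y : (x,y) ∈ R} is nonempty. Then R can be uniformised: there is a finitely supported function f : X → Y such that (x, f(x)) ∈ R for all x ∈ X. -/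
/-- Codes for polynomial orbit-finite sets: built from the atoms and singleton sets
by finite products and coproducts. -/
inductive PolyCode : Type where
  | atom : PolyCode
  | unit : PolyCode
  | prod : PolyCode → PolyCode → PolyCode
  | sum : PolyCode → PolyCode → PolyCode

/-- The polynomial orbit-finite set described by a code. -/
def PolyCode.interp : PolyCode → Type
  | .atom => Atom
  | .unit => Unit
  | .prod c d => c.interp × d.interp
  | .sum c d => c.interp ⊕ d.interp

/-- The componentwise action of atom automorphisms on a polynomial orbit-finite set. -/
def PolyCode.act (π : AtomPerm) : (c : PolyCode) → c.interp → c.interp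
  | .atom, a => π a
  | .unit, u => u
  | .prod c d, p => (c.act π p.1, d.act π p.2)
  | .sum c d, x => x.elim (fun a => Sum.inl (c.act π a)) (fun b => Sum.inr (d.act π b))

theorem PolyCode.act_one : ∀ (c : PolyCode) (x : c.interp), c.act 1 x = x
  | .atom, a => rfl
  | .unit, _ => rfl
  | .prod c d, p => by
      simp only [PolyCode.act, PolyCode.act_one c p.1, PolyCode.act_one d p.2, Prod.mk.eta]
      rfl
  | .sum c d, x => by
      cases x with
      | inl a => exact congrArg Sum.inl (PolyCode.act_one c a)
      | inr b => exact congrArg Sum.inr (PolyCode.act_one d b)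

theorem PolyCode.act_mul (π σ : AtomPerm) :
    ∀ (c : PolyCode) (x : c.interp), c.act (π * σ) x = c.act π (c.act σ x)
  | .atom, a => rfl
  | .unit, _ => rfl
  | .prod c d, p => by
      simp only [PolyCode.act, PolyCode.act_mul π σ c p.1, PolyCode.act_mul π σ d p.2]
      rfl
  | .sum c d, x => by
      cases x with
      | inl a => exact congrArg Sum.inl (PolyCode.act_mul π σ c a)
      | inr b => exact congrArg Sum.inr (PolyCode.act_mul π σ d b)

instance (c : PolyCode) : MulAction AtomPerm c.interp where
  smul π x := c.act π x
  one_smul x := c.act_one x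
  mul_smul π σ x := c.act_mul π σ x

/-- `h : Σ* → M` is a monoid homomorphism from the free monoid of strings over `Σ`. -/
def IsListHom {X M : Type*} [Monoid M] (h : List X → M) : Prop :=
  h [] = 1 ∧ ∀ u v : List X, h (u ++ v) = h u * h v

/-- Equivariance of a function on strings, with the letterwise action on strings. -/
def ListHomEquivariant {X M : Type*} [MulAction AtomPerm X] [Monoid M] [MulAction AtomPerm M]
    (h : List X → M) : Prop :=
  ∀ (π : AtomPerm) (l : List X), h (l.map fun x => π • x) = π • h l

section UniformisationAux

open Classical in
/-- First element of the list belonging to the set, if any. -/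
noncomputable def firstMem (S : Set Atom) : List Atom → Option Atom
  | [] => none
  | a :: l => if a ∈ S then some a else firstMem S l

theorem firstMem_eq_some {S : Set Atom} {l : List Atom} {a : Atom}
    (h : firstMem S l = some a) : a ∈ S ∧ a ∈ l := by
  induction l with
  | nil => simp [firstMem] at h
  | cons b l ih =>
    rw [firstMem] at h
    split at h
    · injection h with h
      subst h
      exact ⟨by assumption, List.mem_cons_self⟩
    · obtain ⟨h1, h2⟩ := ih h
      exact ⟨h1, List.mem_cons_of_mem _ h2⟩

theorem firstMem_eq_none {S : Set Atom} {l : List Atom}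
    (h : firstMem S l = none) : ∀ a ∈ l, a ∉ S := by
  induction l with
  | nil => simp
  | cons b l ih =>
    rw [firstMem] at h
    split at h
    · cases h
    · intro a ha
      rcases List.mem_cons.1 ha with rfl | ha'
      · assumption
      · exact ih h a ha'

theorem firstMem_map {S S' : Set Atom} {g : Atom → Atom}
    (hg : ∀ a : Atom, a ∈ S ↔ g a ∈ S') (l : List Atom) :
    firstMem S' (l.map g) = (firstMem S l).map g := by
  induction l with
  | nil => rfl
  | cons b l ih =>
    rw [List.map_cons, firstMem, firstMem]
    by_cases hb : b ∈ S
    · rw [if_pos ((hg b).1 hb), if_pos hb]; rfl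
    · rw [if_neg (fun h => hb ((hg b).2 h)), if_neg hb, ih]

/-- The list of atoms occurring in an element of a polynomial set. -/
def PolyCode.atomsList : (c : PolyCode) → c.interp → List Atom
  | .atom, a => [a]
  | .unit, _ => []
  | .prod c d, p => c.atomsList p.1 ++ d.atomsList p.2
  | .sum c d, x => x.elim c.atomsList d.atomsList

theorem PolyCode.atomsList_act (π : AtomPerm) :
    ∀ (c : PolyCode) (x : c.interp), c.atomsList (c.act π x) = (c.atomsList x).map π
  | .atom, a => rfl
  | .unit, _ => rfl
  | .prod c d, p => by
      simp only [PolyCode.act, PolyCode.atomsList, List.map_append,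
        PolyCode.atomsList_act π c p.1, PolyCode.atomsList_act π d p.2]
  | .sum c d, x => by
      cases x with
      | inl a => exact PolyCode.atomsList_act π c a
      | inr b => exact PolyCode.atomsList_act π d b

theorem PolyCode.act_of_fix (π : AtomPerm) :
    ∀ (c : PolyCode) (x : c.interp), (∀ a ∈ c.atomsList x, π a = a) → c.act π x = x
  | .atom, a, h => h a (List.mem_singleton_self a)
  | .unit, _, _ => rfl
  | .prod c d, p, h => by
      have h1 := PolyCode.act_of_fix π c p.1 fun a ha =>
        h a (by simp [PolyCode.atomsList]; exact Or.inl ha)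
      have h2 := PolyCode.act_of_fix π d p.2 fun a ha =>
        h a (by simp [PolyCode.atomsList]; exact Or.inr ha)
      simp only [PolyCode.act, h1, h2, Prod.mk.eta]
      rfl
  | .sum c d, x, h => by
      cases x with
      | inl a =>
        have := PolyCode.act_of_fix π c a fun b hb => h b (by simpa [PolyCode.atomsList] using hb)
        exact congrArg Sum.inl this
      | inr b =>
        have := PolyCode.act_of_fix π d b fun a ha => h a (by simpa [PolyCode.atomsList] using ha)
        exact congrArg Sum.inr this

/-- An upper bound on the number of atoms in an element. -/
def PolyCode.width : PolyCode → ℕ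
  | .atom => 1
  | .unit => 0
  | .prod c d => c.width + d.width
  | .sum c d => max c.width d.width

theorem PolyCode.atomsList_length_le :
    ∀ (c : PolyCode) (x : c.interp), (c.atomsList x).length ≤ c.width
  | .atom, _ => le_refl 1
  | .unit, _ => le_refl 0
  | .prod c d, p => by
      simp only [PolyCode.atomsList, PolyCode.width, List.length_append]
      exact Nat.add_le_add (PolyCode.atomsList_length_le c p.1) (PolyCode.atomsList_length_le d p.2)
  | .sum c d, x => by
      cases x with
      | inl a => exact le_trans (PolyCode.atomsList_length_le c a) (le_max_left _ _)
      | inr b => exact le_trans (PolyCode.atomsList_length_le d b) (le_max_right _ _)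

theorem PolyCode.interp_nonempty : ∀ c : PolyCode, Nonempty c.interp
  | .atom => ⟨(0 : Atom)⟩
  | .unit => ⟨()⟩
  | .prod c d => by
      obtain ⟨x⟩ := PolyCode.interp_nonempty c
      obtain ⟨y⟩ := PolyCode.interp_nonempty d
      exact ⟨(x, y)⟩
  | .sum c d => by
      obtain ⟨x⟩ := PolyCode.interp_nonempty c
      exact ⟨Sum.inl x⟩

theorem PolyCode.smul_eq_act (c : PolyCode) (π : AtomPerm) (x : c.interp) :
    π • x = c.act π x := rfl

theorem finset_min'_congr {s t : Finset ℕ} (h : s = t) (hs : s.Nonempty) :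
    s.min' hs = t.min' (h ▸ hs) := by subst h; rfl

/-- The main induction (over the code of the codomain) for uniformisation. -/
theorem uniform_aux (cX : PolyCode) : ∀ (cY : PolyCode) (R : Set (cX.interp × cY.interp))
    (A : Finset Atom), SetSupportedBy A R → (∀ x, ∃ y, (x, y) ∈ R) →
    ∃ f : cX.interp → cY.interp, (∃ B : Finset Atom, FunSupportedBy B f) ∧
      ∀ x, (x, f x) ∈ R := by
  intro cY
  induction cY with
  | unit =>
    intro R A hA hNE
    refine ⟨fun _ => (), ⟨∅, fun π _ x => rfl⟩, fun x => ?_⟩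
    obtain ⟨y, hy⟩ := hNE x
    exact hy
  | atom =>
    intro R A hA hNE
    classical
    set n := cX.width with hn
    set B : Finset Atom := (Finset.range (n + 1)).image (fun i => A.sup id + 1 + i) with hB
    have hinj : Function.Injective (fun i : ℕ => A.sup id + 1 + i) := by
      intro i j h
      simp only at h
      exact Nat.add_left_cancel h
    have hBcard : B.card = n + 1 := by
      rw [hB, Finset.card_image_of_injective _ hinj, Finset.card_range]
    have hBA : ∀ b ∈ B, b ∉ A := by
      intro b hb hbA
      have hble : b ≤ A.sup id := Finset.le_sup (f := id) hbA
      rw [hB] at hb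
      simp only [Finset.mem_image, Finset.mem_range] at hb
      obtain ⟨i, _, rfl⟩ := hb
      exact absurd hble
        (Nat.not_le.2 (Nat.lt_of_lt_of_le (Nat.lt_succ_self _) (Nat.le_add_right _ _)))
    set L : cX.interp → List Atom := fun x => A.sort (· ≤ ·) ++ cX.atomsList x with hL
    set T : cX.interp → Finset Atom := fun x => (cX.atomsList x).toFinset with hT
    have hTne : ∀ x, (B \ T x).Nonempty := by
      intro x
      rw [Finset.sdiff_nonempty]
      intro hsub
      have h1 : B.card ≤ (T x).card := Finset.card_le_card hsub
      have h2 : (T x).card ≤ (cX.atomsList x).length := (cX.atomsList x).toFinset_card_le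
      have h3 := cX.atomsList_length_le x
      have h4 : B.card ≤ n := le_trans h1 (le_trans h2 h3)
      rw [hBcard] at h4
      exact Nat.not_succ_le_self n h4
    set f : cX.interp → Atom := fun x =>
      (firstMem {y | (x, y) ∈ R} (L x)).getD ((B \ T x).min' (hTne x)) with hf
    have hAL : ∀ x, ∀ a ∈ A, a ∈ L x := by
      intro x a ha
      exact List.mem_append_left _ ((Finset.mem_sort _).2 ha)
    have hatomL : ∀ x, ∀ a ∈ cX.atomsList x, a ∈ L x := fun x a ha =>
      List.mem_append_right _ ha
    refine ⟨f, ⟨A ∪ B, ?_⟩, ?_⟩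
    · intro π hπ x
      have hπA : ∀ a ∈ A, π a = a := fun a ha => hπ a (Finset.mem_union_left _ ha)
      have hπB : ∀ b ∈ B, π b = b := fun b hb => hπ b (Finset.mem_union_right _ hb)
      have hmap : L (π • x) = (L x).map π := by
        rw [hL]
        simp only
        have hsort : (A.sort (· ≤ ·)).map π = A.sort (· ≤ ·) := by
          refine (List.map_congr_left ?_).trans (List.map_id _)
          intro a ha
          exact hπA a ((Finset.mem_sort _).1 ha)
        rw [PolyCode.smul_eq_act, cX.atomsList_act, List.map_append, hsort]
      have hiff : ∀ a : Atom, a ∈ {y | (x, y) ∈ R} ↔ π a ∈ {y | (π • x, y) ∈ R} := by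
        intro a
        have := hA π hπA (x, a)
        exact this
      have key : firstMem {y | (π • x, y) ∈ R} (L (π • x)) =
          (firstMem {y | (x, y) ∈ R} (L x)).map π := by
        rw [hmap]
        exact firstMem_map hiff (L x)
      have hTB : B \ T (π • x) = B \ T x := by
        ext b
        simp only [Finset.mem_sdiff]
        constructor
        · rintro ⟨hbB, hbT⟩
          refine ⟨hbB, fun hb => hbT ?_⟩
          rw [hT]
          simp only [List.mem_toFinset]
          rw [PolyCode.smul_eq_act, cX.atomsList_act]
          rw [hT] at hb
          simp only [List.mem_toFinset] at hb
          exact List.mem_map.2 ⟨b, hb, hπB b hbB⟩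
        · rintro ⟨hbB, hbT⟩
          refine ⟨hbB, fun hb => hbT ?_⟩
          rw [hT] at hb ⊢
          simp only [List.mem_toFinset] at hb ⊢
          rw [PolyCode.smul_eq_act, cX.atomsList_act] at hb
          obtain ⟨a, ha, hab⟩ := List.mem_map.1 hb
          have : a = b := π.injective (by rw [hab, hπB b hbB])
          rwa [this] at ha
      show f (π • x) = π • f x
      rw [hf]
      simp only
      rw [key]
      cases hfm : firstMem {y | (x, y) ∈ R} (L x) with
      | some y => simp [Option.getD]
      | none =>
        simp only [Option.map_none, Option.getD_none]
        rw [finset_min'_congr hTB]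
        have hmem : (B \ T x).min' (hTne x) ∈ B :=
          (Finset.mem_sdiff.1 (Finset.min'_mem _ (hTne x))).1
        exact (hπB _ hmem).symm
    · intro x
      cases hfm : firstMem {y | (x, y) ∈ R} (L x) with
      | some y =>
        have h := firstMem_eq_some hfm
        show (x, f x) ∈ R
        rw [hf]
        simp only [hfm, Option.getD_some]
        exact h.1
      | none =>
        obtain ⟨y₀, hy₀⟩ := hNE x
        have hnot := firstMem_eq_none hfm
        have hy₀L : y₀ ∉ L x := fun h => hnot y₀ h hy₀
        set z := (B \ T x).min' (hTne x) with hz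
        have hzmem : z ∈ B \ T x := Finset.min'_mem _ _
        have hzB : z ∈ B := (Finset.mem_sdiff.1 hzmem).1
        have hzT : z ∉ T x := (Finset.mem_sdiff.1 hzmem).2
        have hy₀A : y₀ ∉ A := fun h => hy₀L (hAL x y₀ h)
        have hy₀atoms : y₀ ∉ cX.atomsList x := fun h => hy₀L (hatomL x y₀ h)
        have hzA : z ∉ A := hBA z hzB
        have hzatoms : z ∉ cX.atomsList x := fun h => hzT (List.mem_toFinset.2 h)
        set π : AtomPerm := Equiv.swap y₀ z with hπ
        have hπA : ∀ a ∈ A, π a = a := by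
          intro a ha
          exact Equiv.swap_apply_of_ne_of_ne (fun h => hy₀A (h ▸ ha)) (fun h => hzA (h ▸ ha))
        have hπx : π • x = x := by
          rw [PolyCode.smul_eq_act]
          exact cX.act_of_fix π x fun a ha =>
            Equiv.swap_apply_of_ne_of_ne (fun h => hy₀atoms (h ▸ ha)) (fun h => hzatoms (h ▸ ha))
        have hstep := (hA π hπA (x, y₀)).1 hy₀
        have heq : π • ((x, y₀) : cX.interp × PolyCode.atom.interp) = (x, z) := by
          have h1 : π • y₀ = z := by
            show π y₀ = z
            rw [hπ]
            exact @Equiv.swap_apply_left Atom instDecidableEqNat y₀ z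
          rw [Prod.smul_mk, hπx, h1]
          rfl
        rw [heq] at hstep
        show (x, f x) ∈ R
        rw [hf]
        simp only [hfm, Option.getD_none]
        exact hstep
  | prod cC cD ihC ihD =>
    intro R A hA hNE
    classical
    set RC : Set (cX.interp × cC.interp) := {p | ∃ d, (p.1, (p.2, d)) ∈ R} with hRC
    have hRCsupp : SetSupportedBy A RC := by
      intro π hπ p
      constructor
      · rintro ⟨d, hd⟩
        exact ⟨π • d, (hA π hπ (p.1, (p.2, d))).1 hd⟩
      · rintro ⟨d, hd⟩
        refine ⟨π⁻¹ • d, ?_⟩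
        have := (hA π hπ (p.1, (p.2, π⁻¹ • d))).2
        apply this
        have : π • (π⁻¹ • d) = d := smul_inv_smul π d
        show ((π • p.1, (π • p.2, π • (π⁻¹ • d))) : cX.interp × (cC.prod cD).interp) ∈ R
        rw [this]
        exact hd
      -- note: π • (p.1, (p.2, d)) = (π • p.1, (π • p.2, π • d)) definitionally
    have hRCne : ∀ x, ∃ c, (x, c) ∈ RC := by
      intro x
      obtain ⟨⟨c, d⟩, hcd⟩ := hNE x
      exact ⟨c, d, hcd⟩
    obtain ⟨fC, ⟨AC, hfC⟩, hfCR⟩ := ihC RC A hRCsupp hRCne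
    set RD : Set (cX.interp × cD.interp) := {p | (p.1, (fC p.1, p.2)) ∈ R} with hRD
    have hRDsupp : SetSupportedBy (A ∪ AC) RD := by
      intro π hπ p
      have hπA : ∀ a ∈ A, π a = a := fun a ha => hπ a (Finset.mem_union_left _ ha)
      have hπAC : ∀ a ∈ AC, π a = a := fun a ha => hπ a (Finset.mem_union_right _ ha)
      have hfCeq : fC (π • p.1) = π • fC p.1 := hfC π hπAC p.1
      have := hA π hπA (p.1, (fC p.1, p.2))
      show (p.1, (fC p.1, p.2)) ∈ R ↔ (π • p.1, (fC (π • p.1), π • p.2)) ∈ R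
      rw [hfCeq]
      exact this
    have hRDne : ∀ x, ∃ d, (x, d) ∈ RD := fun x => hfCR x
    obtain ⟨fD, ⟨AD, hfD⟩, hfDR⟩ := ihD RD (A ∪ AC) hRDsupp hRDne
    refine ⟨fun x => (fC x, fD x), ⟨AC ∪ AD, ?_⟩, fun x => hfDR x⟩
    intro π hπ x
    have hπAC : ∀ a ∈ AC, π a = a := fun a ha => hπ a (Finset.mem_union_left _ ha)
    have hπAD : ∀ a ∈ AD, π a = a := fun a ha => hπ a (Finset.mem_union_right _ ha)
    show ((fC (π • x), fD (π • x)) : (cC.prod cD).interp) = π • (fC x, fD x)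
    rw [hfC π hπAC, hfD π hπAD]
    rfl
  | sum cC cD ihC ihD =>
    intro R A hA hNE
    classical
    set P : cX.interp → Prop := fun x => ∃ c, (x, Sum.inl c) ∈ R with hP
    have hPiff : ∀ (π : AtomPerm), (∀ a ∈ A, π a = a) → ∀ x, (P x ↔ P (π • x)) := by
      intro π hπ x
      constructor
      · rintro ⟨c, hc⟩
        exact ⟨π • c, (hA π hπ (x, Sum.inl c)).1 hc⟩
      · rintro ⟨c, hc⟩
        refine ⟨π⁻¹ • c, (hA π hπ (x, Sum.inl (π⁻¹ • c))).2 ?_⟩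
        show ((π • x, Sum.inl (π • (π⁻¹ • c))) : cX.interp × (cC.sum cD).interp) ∈ R
        rw [smul_inv_smul]
        exact hc
    set RC : Set (cX.interp × cC.interp) := {p | (p.1, Sum.inl p.2) ∈ R ∨ ¬ P p.1} with hRC
    have hRCsupp : SetSupportedBy A RC := by
      intro π hπ p
      have h1 := hA π hπ (p.1, Sum.inl p.2)
      have h2 := hPiff π hπ p.1
      show ((p.1, Sum.inl p.2) ∈ R ∨ ¬ P p.1) ↔ ((π • p.1, Sum.inl (π • p.2)) ∈ R ∨ ¬ P (π • p.1))
      rw [← h2]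
      exact or_congr h1 Iff.rfl
    have hRCne : ∀ x, ∃ c, (x, c) ∈ RC := by
      intro x
      by_cases hx : P x
      · obtain ⟨c, hc⟩ := hx
        exact ⟨c, Or.inl hc⟩
      · obtain ⟨c⟩ := cC.interp_nonempty
        exact ⟨c, Or.inr hx⟩
    obtain ⟨fC, ⟨AC, hfC⟩, hfCR⟩ := ihC RC A hRCsupp hRCne
    set RD : Set (cX.interp × cD.interp) := {p | (p.1, Sum.inr p.2) ∈ R ∨ P p.1} with hRD
    have hRDsupp : SetSupportedBy A RD := by
      intro π hπ p
      have h1 := hA π hπ (p.1, Sum.inr p.2)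
      have h2 := hPiff π hπ p.1
      show ((p.1, Sum.inr p.2) ∈ R ∨ P p.1) ↔ ((π • p.1, Sum.inr (π • p.2)) ∈ R ∨ P (π • p.1))
      rw [← h2]
      exact or_congr h1 Iff.rfl
    have hRDne : ∀ x, ∃ d, (x, d) ∈ RD := by
      intro x
      by_cases hx : P x
      · obtain ⟨d⟩ := cD.interp_nonempty
        exact ⟨d, Or.inr hx⟩
      · obtain ⟨y, hy⟩ := hNE x
        cases y with
        | inl c => exact absurd ⟨c, hy⟩ hx
        | inr d => exact ⟨d, Or.inl hy⟩
    obtain ⟨fD, ⟨AD, hfD⟩, hfDR⟩ := ihD RD A hRDsupp hRDne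
    set f : cX.interp → (cC.sum cD).interp := fun x =>
      if P x then Sum.inl (fC x) else Sum.inr (fD x) with hf
    refine ⟨f, ⟨A ∪ (AC ∪ AD), ?_⟩, ?_⟩
    · intro π hπ x
      have hπA : ∀ a ∈ A, π a = a := fun a ha => hπ a (Finset.mem_union_left _ ha)
      have hπAC : ∀ a ∈ AC, π a = a := fun a ha =>
        hπ a (Finset.mem_union_right _ (Finset.mem_union_left _ ha))
      have hπAD : ∀ a ∈ AD, π a = a := fun a ha =>
        hπ a (Finset.mem_union_right _ (Finset.mem_union_right _ ha))
      have h2 := hPiff π hπA x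
      rw [hf]
      simp only
      by_cases hx : P x
      · exact (if_pos (h2.1 hx)).trans ((congrArg Sum.inl (hfC π hπAC x)).trans
          (congrArg (fun y : (cC.sum cD).interp => π • y)
            (@if_pos _ _ hx (cC.sum cD).interp (Sum.inl (fC x)) (Sum.inr (fD x)))).symm)
      · exact (if_neg (fun h => hx (h2.2 h))).trans ((congrArg Sum.inr (hfD π hπAD x)).trans
          (congrArg (fun y : (cC.sum cD).interp => π • y)
            (@if_neg _ _ hx (cC.sum cD).interp (Sum.inl (fC x)) (Sum.inr (fD x)))).symm)
    · intro x
      rw [hf]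
      simp only
      by_cases hx : P x
      · refine (congrArg (fun y => (x, y) ∈ R) (if_pos hx :
          (if P x then Sum.inl (fC x) else Sum.inr (fD x) : (cC.sum cD).interp) = Sum.inl (fC x))).mpr ?_
        rcases hfCR x with h | h
        · exact h
        · exact absurd hx h
      · refine (congrArg (fun y => (x, y) ∈ R) (if_neg hx :
          (if P x then Sum.inl (fC x) else Sum.inr (fD x) : (cC.sum cD).interp) = Sum.inr (fD x))).mpr ?_
        rcases hfDR x with h | h
        · exact h
        · exact absurd h hx

end UniformisationAux

/-- (Uniformisation) Let `X` and `Y` be polynomial orbit-finite sets and `R ⊆ X × Y` a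
finitely supported relation all of whose sections are nonempty. Then `R` can be
uniformised by a finitely supported function. -/
theorem uniformisation (cX cY : PolyCode)
    (R : Set (cX.interp × cY.interp))
    (hSupp : ∃ A : Finset Atom, SetSupportedBy A R)
    (hNE : ∀ x : cX.interp, ∃ y : cY.interp, (x, y) ∈ R) :
    ∃ f : cX.interp → cY.interp,
      (∃ A : Finset Atom, FunSupportedBy A f) ∧ ∀ x : cX.interp, (x, f x) ∈ R := by
  obtain ⟨A, hA⟩ := hSupp
  exact uniform_aux cX cY R A hA hNE
end

section
/- Let M be an orbit-finite monoid acting on the right on a set Q containing a distinguished element ⊥ with ⊥·m = ⊥ for all m ∈ M. For every smooth sequence x₁, …, x_k of elements of M and every q ∈ Q, q is compatible with x₁ if and only if q is compatible with the product x₁·x₂⋯x_k. -/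
-- Lemma A: permutation extension
theorem lemA (B D F : Finset ℕ) (hBD : Disjoint B D) (hBF : Disjoint B F)
    (hcard : D.card ≤ F.card) :
    ∃ ρ : Equiv.Perm ℕ, (∀ b ∈ B, ρ b = b) ∧ (∀ d ∈ D, ρ d ∈ F) := by
  classical
  have hs : (D \ F).card ≤ (F \ D).card := by
    have h1 := Finset.card_sdiff_add_card_inter D F
    have h2 := Finset.card_sdiff_add_card_inter F D
    rw [Finset.inter_comm] at h2
    omega
  obtain ⟨t, htF, htcard⟩ := Finset.exists_subset_card_eq hs
  have e : ↥(D \ F) ≃ ↥t := Finset.equivOfCardEq htcard.symm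
  have hdisj : Disjoint (D \ F) t := by
    refine Finset.disjoint_left.mpr ?_
    intro a ha hat
    exact (Finset.mem_sdiff.mp (htF hat)).2 (Finset.mem_sdiff.mp ha).1
  set g : ℕ → ℕ := fun x =>
    if h : x ∈ D \ F then (e ⟨x, h⟩ : ℕ)
    else if h : x ∈ t then (e.symm ⟨x, h⟩ : ℕ) else x with hg
  have hginv : Function.Involutive g := by
    intro x
    by_cases h : x ∈ D \ F
    · have h1 : (e ⟨x, h⟩ : ℕ) ∈ t := (e ⟨x, h⟩).2
      have h2 : (e ⟨x, h⟩ : ℕ) ∉ D \ F := Finset.disjoint_right.mp hdisj h1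
      simp only [hg, dif_pos h, dif_neg h2, dif_pos h1]
      rw [show (⟨(e ⟨x, h⟩ : ℕ), h1⟩ : ↥t) = e ⟨x, h⟩ from Subtype.ext rfl]
      simp
    · by_cases h2 : x ∈ t
      · have h3 : (e.symm ⟨x, h2⟩ : ℕ) ∈ D \ F := (e.symm ⟨x, h2⟩).2
        simp only [hg, dif_neg h, dif_pos h2, dif_pos h3]
        rw [show (⟨(e.symm ⟨x, h2⟩ : ℕ), h3⟩ : ↥(D \ F)) = e.symm ⟨x, h2⟩ from Subtype.ext rfl]
        simp
      · simp only [hg, dif_neg h, dif_neg h2]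
  refine ⟨hginv.toPerm, ?_, ?_⟩
  · intro b hb
    have h1 : b ∉ D \ F := fun h => Finset.disjoint_left.mp hBD hb (Finset.mem_sdiff.mp h).1
    have h2 : b ∉ t := fun h => Finset.disjoint_left.mp hBF hb (Finset.mem_sdiff.mp (htF h)).1
    show g b = b
    simp only [hg, dif_neg h1, dif_neg h2]
  · intro d hd
    by_cases h : d ∈ D \ F
    · show g d ∈ F
      simp only [hg, dif_pos h]
      exact (Finset.mem_sdiff.mp (htF (e ⟨d, h⟩).2)).1
    · have hdF : d ∈ F := by
        by_contra hdF
        exact h (Finset.mem_sdiff.mpr ⟨hd, hdF⟩)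
      have h2 : d ∉ t := fun ht => (Finset.mem_sdiff.mp (htF ht)).2 hd
      show g d ∈ F
      simp only [hg, dif_neg h, dif_neg h2]
      exact hdF

-- Lemma B: B-supported elements in a single orbit form a finite set
theorem lemB {X : Type*} [MulAction AtomPerm X] (r : X) (C : Finset Atom)
    (hC : SupportedBy C r) (B : Finset Atom) :
    {x : X | SupportedBy B x ∧ ∃ π : AtomPerm, π • r = x}.Finite := by
  classical
  set F : Finset ℕ := (Finset.range C.card).image (fun i => B.sup id + 1 + i) with hF
  have hBF : Disjoint B F := by
    refine Finset.disjoint_right.mpr ?_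
    intro a haF haB
    obtain ⟨i, _, hi⟩ := Finset.mem_image.mp haF
    have : a ≤ B.sup id := Finset.le_sup (f := id) haB
    exact Nat.not_succ_le_self (B.sup id)
      (le_trans (le_trans (Nat.le_add_right (B.sup id + 1) i) (le_of_eq hi)) this)
  have hFcard : F.card = C.card := by
    rw [hF, Finset.card_image_of_injective _ (fun i j h => by omega), Finset.card_range]
  set g : (↥C → ↥(B ∪ F)) → X := fun f =>
    if h : ∃ π : AtomPerm, ∀ c : ↥C, π c = (f c : ℕ) then h.choose • r else r with hg
  have : {x : X | SupportedBy B x ∧ ∃ π : AtomPerm, π • r = x} ⊆ Set.range g := by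
    rintro x ⟨hxB, π, rfl⟩
    set D : Finset ℕ := (C.image π) \ B with hD
    have hBD : Disjoint B D := Finset.disjoint_right.mpr (fun a ha => (Finset.mem_sdiff.mp ha).2)
    have hDcard : D.card ≤ F.card := by
      rw [hFcard]
      calc D.card ≤ (C.image π).card := Finset.card_le_card (Finset.sdiff_subset)
        _ ≤ C.card := Finset.card_image_le
    obtain ⟨ρ, hρB, hρD⟩ := lemA B D F hBD hBF hDcard
    set τ : AtomPerm := ρ * π with hτ
    have hτr : τ • r = π • r := by
      rw [hτ, mul_smul]
      exact hxB ρ hρB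
    have hτC : ∀ c ∈ C, τ c ∈ B ∪ F := by
      intro c hc
      by_cases h : π c ∈ B
      · rw [Finset.mem_union]
        left
        rw [hτ, Equiv.Perm.mul_apply, hρB _ h]
        exact h
      · rw [Finset.mem_union]
        right
        rw [hτ, Equiv.Perm.mul_apply]
        exact hρD _ (Finset.mem_sdiff.mpr ⟨Finset.mem_image_of_mem π hc, h⟩)
    refine ⟨fun c => ⟨τ c, hτC c c.2⟩, ?_⟩
    have hex : ∃ π' : AtomPerm, ∀ c : ↥C, π' c = ((⟨τ c, hτC c c.2⟩ : ↥(B ∪ F)) : ℕ) :=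
      ⟨τ, fun c => rfl⟩
    rw [hg]
    simp only [dif_pos hex]
    have hagree : ∀ c : ↥C, hex.choose c = τ c := hex.choose_spec
    have : (τ⁻¹ * hex.choose) • r = r := by
      apply hC
      intro a ha
      rw [Equiv.Perm.mul_apply, hagree ⟨a, ha⟩]
      simp
    calc hex.choose • r = τ • ((τ⁻¹ * hex.choose) • r) := by
          rw [← mul_smul]
          congr 1
          group
      _ = τ • r := by rw [this]
      _ = π • r := hτr
  exact Set.Finite.subset (Set.finite_range g) this


-- Lemma C
theorem lemC {X : Type*} [MulAction AtomPerm X] (hX : OrbitFinite X) (B : Finset Atom) :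
    {x : X | SupportedBy B x}.Finite := by
  classical
  obtain ⟨h1, A₀, reps, horb⟩ := hX
  have hsub : {x : X | SupportedBy B x} ⊆
      ⋃ r ∈ (reps : Set X), {x : X | SupportedBy B x ∧ ∃ π : AtomPerm, π • r = x} := by
    intro x hx
    obtain ⟨r, hr, π, _, hπr⟩ := horb x
    exact Set.mem_biUnion hr ⟨hx, π, hπr⟩
  refine Set.Finite.subset (Set.Finite.biUnion reps.finite_toSet ?_) hsub
  intro r _
  obtain ⟨C, hC⟩ := h1 r
  exact lemB r C hC B


-- powers are eventually periodic
theorem lemD {M : Type*} [Monoid M] [MulAction AtomPerm M]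
    (hM : OrbitFinite M ∧ MulFinitelySupported M) (t : M) :
    ∃ n c : ℕ, 1 ≤ c ∧ t ^ (n + c) = t ^ n := by
  classical
  obtain ⟨hOF, Am, hAm⟩ := hM
  obtain ⟨At, hAt⟩ := hOF.1 t
  set B : Finset Atom := Am ∪ At with hB
  have hone : ∀ π : AtomPerm, (∀ a ∈ B, π a = a) → π • (1 : M) = 1 := by
    intro π hπ
    have hπm : ∀ a ∈ Am, π a = a := fun a ha => hπ a (Finset.mem_union_left _ ha)
    have h1 := hAm π hπm (π⁻¹ • 1) 1
    rw [mul_one, smul_inv_smul, one_mul] at h1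
    exact h1.symm
  have hpow : ∀ n : ℕ, SupportedBy B (t ^ n) := by
    intro n
    induction n with
    | zero => intro π hπ; rw [pow_zero]; exact hone π hπ
    | succ n ih =>
      intro π hπ
      have hπm : ∀ a ∈ Am, π a = a := fun a ha => hπ a (Finset.mem_union_left _ ha)
      rw [pow_succ, hAm π hπm, ih π hπ, hAt π (fun a ha => hπ a (Finset.mem_union_right _ ha))]
  have hfin : {x : M | SupportedBy B x}.Finite := lemC hOF B
  have hnotinj : ¬ Function.Injective (fun n : ℕ => t ^ n) := by
    intro hinj
    have : (Set.range (fun n : ℕ => t ^ n)).Infinite := Set.infinite_range_of_injective hinj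
    exact this (hfin.subset (by rintro x ⟨n, rfl⟩; exact hpow n))
  rw [Function.not_injective_iff] at hnotinj
  obtain ⟨m, n, hmn, hne⟩ := hnotinj
  rcases Nat.lt_or_ge n m with h | h
  · exact ⟨n, m - n, by omega, by rw [Nat.add_sub_cancel' (le_of_lt h)]; exact hmn⟩
  · have h' : n > m := lt_of_le_of_ne h hne
    exact ⟨m, n - m, by omega, by rw [Nat.add_sub_cancel' (le_of_lt h')]; exact hmn.symm⟩

/-- For an orbit-finite monoid right-acting on a set `Q` with absorbing element `⊥`, and
every smooth sequence `x₁, …, x_k`, an element `q ∈ Q` is compatible with `x₁` if and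
only if it is compatible with the product `x₁⋯x_k`. -/
theorem smooth_compatibility {M : Type*} [Monoid M] [MulAction AtomPerm M]
    (hM : OrbitFiniteMonoid M) {Q : Type*}
    (act : Q → M → Q) (bot : Q)
    (hone : ∀ q : Q, act q 1 = q)
    (hmul : ∀ (q : Q) (m n : M), act q (m * n) = act (act q m) n)
    (hbot : ∀ m : M, act bot m = bot)
    (l : List M) (hne : l ≠ []) (hsm : SmoothSeq l) :
    ∀ q : Q, act q (l.head hne) ≠ bot ↔ act q l.prod ≠ bot := by
  intro q
  obtain ⟨x, rest, rfl⟩ : ∃ x rest, l = x :: rest :=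
    ⟨l.head hne, l.tail, (List.cons_head_tail hne).symm⟩
  simp only [List.head_cons, List.prod_cons]
  obtain ⟨y, z, hyz⟩ := hsm x List.mem_cons_self
  simp only [List.prod_cons] at hyz
  set w := rest.prod with hw
  set t := w * z with ht
  have hbase : y * x * t = x := by
    rw [ht, ← mul_assoc, mul_assoc y x w, hyz]
  have hiter : ∀ n : ℕ, y ^ n * x * t ^ n = x := by
    intro n
    induction n with
    | zero => simp
    | succ n ih =>
      have h1 : y ^ (n + 1) * x * t ^ (n + 1) = y ^ n * (y * x * t) * t ^ n := by
        rw [pow_succ y n, pow_succ' t n]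
        simp only [mul_assoc]
      rw [h1, hbase]
      exact ih
  obtain ⟨n, c, hc, hper⟩ := lemD hM t
  have hx : x * t ^ c = x := by
    calc x * t ^ c = y ^ n * x * t ^ n * t ^ c := by rw [hiter n]
      _ = y ^ n * x * (t ^ n * t ^ c) := by rw [mul_assoc]
      _ = y ^ n * x * t ^ (n + c) := by rw [← pow_add]
      _ = y ^ n * x * t ^ n := by rw [hper]
      _ = x := hiter n
  have hfinal : x = (x * w) * (z * t ^ (c - 1)) := by
    have hc1 : c = 1 + (c - 1) := by omega
    calc x = x * t ^ c := hx.symm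
      _ = x * (t ^ 1 * t ^ (c - 1)) := by rw [← pow_add, ← hc1]
      _ = x * ((w * z) * t ^ (c - 1)) := by rw [pow_one, ht]
      _ = (x * w) * (z * t ^ (c - 1)) := by
          rw [mul_assoc w z _, ← mul_assoc x w _]
  constructor
  · intro hqx hqp
    apply hqx
    calc act q x = act q ((x * w) * (z * t ^ (c - 1))) := by rw [← hfinal]
      _ = act (act q (x * w)) (z * t ^ (c - 1)) := hmul _ _ _
      _ = act bot (z * t ^ (c - 1)) := by rw [hqp]
      _ = bot := hbot _
  · intro hqp hqx
    apply hqp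
    rw [hmul, hqx, hbot]
end
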